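/- arXiv:2604.14686 — 2 statements merged into one kernel-verified Lean document; each statement's English description precedes it below -/
import Mathlib

section
/- For positive integers p and q, the local energy of the complete bipartite graph K_{p,q} is e(K_{p,q}) = 2(p+q)√(pq) − 2p√((p−1)q) − 2q√((q−1)p). -/
open SimpleGraph Matrix Finset

noncomputable section

/-- The adjacency matrix of a simple graph over `ℝ` is Hermitian. -/
lemma adjMatrix_isHermitian {V : Type*} [Fintype V] (G : SimpleGraph V)
    [DecidableRel G.Adj] : (G.adjMatrix ℝ).IsHermitian := by
  rw [Matrix.IsHermitian, Matrix.conjTranspose_eq_transpose_of_trivial]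
  exact G.isSymm_adjMatrix

/-- The energy of a finite simple graph: the sum of the absolute values of the
eigenvalues of its adjacency matrix. -/
def graphEnergy {V : Type*} [Fintype V] [DecidableEq V] (G : SimpleGraph V) : ℝ :=
  letI := Classical.decRel G.Adj
  ∑ i, |(adjMatrix_isHermitian G).eigenvalues i|

/-- The local energy of `G` at a vertex `v`: the energy of `G` minus the energy of the
induced subgraph obtained by deleting `v`. -/
def localEnergyAt {V : Type*} [Fintype V] [DecidableEq V] (G : SimpleGraph V) (v : V) : ℝ :=
  graphEnergy G - graphEnergy (G.induce {u | u ≠ v})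

/-- The local energy of `G`: the sum of the local energies at all vertices. -/
def localEnergy {V : Type*} [Fintype V] [DecidableEq V] (G : SimpleGraph V) : ℝ :=
  ∑ v, localEnergyAt G v

end

section Aux

open Module

variable {n : Type*} [Fintype n] [DecidableEq n]

lemma my_trace_eq {A : Matrix n n ℝ} (hA : A.IsHermitian) :
    A.trace = ∑ i, hA.eigenvalues i := by
  conv_lhs => rw [hA.spectral_theorem, Unitary.conjStarAlgAut_apply]
  rw [Matrix.trace_mul_cycle, Unitary.coe_star_mul_self, one_mul, trace_diagonal]
  simp

set_option maxHeartbeats 1000000 in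
lemma my_trace_sq {A : Matrix n n ℝ} (hA : A.IsHermitian) :
    (A * A).trace = ∑ i, hA.eigenvalues i ^ 2 := by
  set U : Matrix n n ℝ := ↑(hA.eigenvectorUnitary) with hU
  set D : Matrix n n ℝ := diagonal (RCLike.ofReal ∘ hA.eigenvalues) with hD
  have h2 : star U * U = 1 := Unitary.coe_star_mul_self hA.eigenvectorUnitary
  have h3 : ∀ X : Matrix n n ℝ, star U * (U * X) = X := by
    intro X; rw [← Matrix.mul_assoc, h2, Matrix.one_mul]
  have key : U * D * star U * (U * D * star U) = U * (D * D) * star U := by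
    simp only [Matrix.mul_assoc, h3]
  conv_lhs => rw [hA.spectral_theorem, Unitary.conjStarAlgAut_apply]
  rw [← hU, ← hD, key, Matrix.trace_mul_cycle, ← Matrix.mul_assoc, h2, Matrix.one_mul,
    hD, diagonal_mul_diagonal, trace_diagonal]
  simp [pow_two]

omit [DecidableEq n] in
lemma my_range_vecMulVec (a b : n → ℝ) :
    LinearMap.range (vecMulVec a b).mulVecLin ≤ Submodule.span ℝ {a} := by
  rintro _ ⟨c, rfl⟩
  refine Submodule.mem_span_singleton.2 ⟨b ⬝ᵥ c, ?_⟩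
  ext i
  simp only [mulVecLin_apply, Matrix.mulVec, vecMulVec_apply, dotProduct, Pi.smul_apply,
    smul_eq_mul, Finset.sum_mul]
  exact Finset.sum_congr rfl fun j _ => by ring

set_option maxHeartbeats 1000000 in
omit [DecidableEq n] in
lemma my_rank_le_two (a b : n → ℝ) :
    (vecMulVec a b + vecMulVec b a).rank ≤ 2 := by
  have hsub1 : (Submodule.span ℝ {a} : Submodule ℝ (n → ℝ)) ≤ Submodule.span ℝ {a, b} :=
    Submodule.span_mono (Set.singleton_subset_iff.2 (Set.mem_insert a {b}))
  have hsub2 : (Submodule.span ℝ {b} : Submodule ℝ (n → ℝ)) ≤ Submodule.span ℝ {a, b} :=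
    Submodule.span_mono (Set.singleton_subset_iff.2 (Set.mem_insert_of_mem a rfl))
  have hle : LinearMap.range (vecMulVec a b + vecMulVec b a).mulVecLin ≤
      Submodule.span ℝ {a, b} := by
    rintro _ ⟨c, rfl⟩
    rw [mulVecLin_apply, Matrix.add_mulVec]
    refine Submodule.add_mem _ (hsub1 ?_) (hsub2 ?_)
    · exact my_range_vecMulVec a b ⟨c, mulVecLin_apply _ _⟩
    · exact my_range_vecMulVec b a ⟨c, mulVecLin_apply _ _⟩
  calc (vecMulVec a b + vecMulVec b a).rank
      ≤ finrank ℝ (Submodule.span ℝ ({a, b} : Set (n → ℝ))) :=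
        Submodule.finrank_mono hle
    _ ≤ ({a, b} : Set (n → ℝ)).toFinset.card := finrank_span_le_card _
    _ ≤ 2 := by
        rw [Set.toFinset_insert, Set.toFinset_singleton]
        exact (Finset.card_insert_le _ _).trans (by simp)

lemma my_sum_abs (f : n → ℝ) (m : ℝ) (hm : 0 ≤ m)
    (h0 : ∑ i, f i = 0) (h2 : ∑ i, f i ^ 2 = 2 * m)
    (hcard : (univ.filter (f · ≠ 0)).card ≤ 2) :
    ∑ i, |f i| = 2 * Real.sqrt m := by
  set S := univ.filter (f · ≠ 0) with hS
  have hmem : ∀ i, i ∈ S ↔ f i ≠ 0 := by intro i; simp [hS]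
  have hout : ∀ i ∈ univ, i ∉ S → f i = 0 := by
    intro i _ hi; by_contra hne; exact hi ((hmem i).2 hne)
  have e0 : ∑ i ∈ S, f i = 0 := by
    rw [← h0]; exact Finset.sum_subset (Finset.subset_univ S) hout
  have e2 : ∑ i ∈ S, f i ^ 2 = 2 * m := by
    rw [← h2]
    exact Finset.sum_subset (Finset.subset_univ S) (fun i h1 h2 => by rw [hout i h1 h2]; ring)
  have eabs : ∑ i ∈ S, |f i| = ∑ i, |f i| :=
    Finset.sum_subset (Finset.subset_univ S) (fun i h1 h2 => by rw [hout i h1 h2]; simp)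
  interval_cases h : S.card
  · rw [Finset.card_eq_zero] at h
    rw [h, Finset.sum_empty] at e2
    rw [← eabs, h, Finset.sum_empty]
    have : m = 0 := by linarith
    simp [this]
  · obtain ⟨a, ha⟩ := Finset.card_eq_one.mp h
    have hfa : f a ≠ 0 := (hmem a).1 (by simp [ha])
    rw [ha, Finset.sum_singleton] at e0
    exact absurd e0 hfa
  · obtain ⟨a, b, hab, hS2⟩ := Finset.card_eq_two.mp h
    have hfa : f a ≠ 0 := (hmem a).1 (by simp [hS2])
    rw [hS2, Finset.sum_pair hab] at e0 e2
    rw [← eabs, hS2, Finset.sum_pair hab]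
    have hb : f b = -f a := by linarith
    have hfa2 : f a ^ 2 = m := by rw [hb] at e2; nlinarith
    have : Real.sqrt m = |f a| := by rw [← hfa2, Real.sqrt_sq_eq_abs]
    rw [this, hb, abs_neg]; ring

set_option maxHeartbeats 1000000 in
lemma graphEnergy_bipartite {V : Type*} [Fintype V] [DecidableEq V] (G : SimpleGraph V)
    (L : V → Prop) [DecidablePred L] (cp cq : ℕ)
    (hcp : (univ.filter L).card = cp) (hcq : (univ.filter (fun v => ¬ L v)).card = cq)
    (h : ∀ u w, G.Adj u w ↔ (L u ∧ ¬ L w) ∨ (¬ L u ∧ L w)) :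
    graphEnergy G = 2 * Real.sqrt (cp * cq) := by
  letI := Classical.decRel G.Adj
  set A : Matrix V V ℝ := G.adjMatrix ℝ with hA
  set a : V → ℝ := fun i => if L i then 1 else 0 with ha
  set b : V → ℝ := fun i => if L i then 0 else 1 with hb
  have hAeq : A = vecMulVec a b + vecMulVec b a := by
    ext i j
    by_cases hi : L i <;> by_cases hj : L j <;>
      simp [hA, SimpleGraph.adjMatrix_apply, h i j, ha, hb, hi, hj, vecMulVec_apply]
  have hherm := adjMatrix_isHermitian G
  have hsuma : ∑ i, a i = (cp : ℝ) := by
    rw [← hcp]; simp [ha, Finset.sum_ite, Finset.sum_const]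
  have hsumb : ∑ i, b i = (cq : ℝ) := by
    rw [← hcq]; simp [hb, Finset.sum_ite, Finset.sum_const]
  have h0 : ∑ i, hherm.eigenvalues i = 0 := by
    rw [← my_trace_eq hherm]; exact G.trace_adjMatrix (α := ℝ)
  have key : ∀ i j, A i j * A j i = a i * b j + b i * a j := by
    intro i j
    by_cases hi : L i <;> by_cases hj : L j <;>
      simp [hA, SimpleGraph.adjMatrix_apply, h i j, h j i, ha, hb, hi, hj]
  have h2 : ∑ i, hherm.eigenvalues i ^ 2 = 2 * ((cp : ℝ) * cq) := by
    rw [← my_trace_sq hherm]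
    have : (A * A).trace = ∑ i, ∑ j, A i j * A j i := by
      simp [Matrix.trace, Matrix.diag, Matrix.mul_apply]
    rw [this]
    have e1 : ∑ i : V, ∑ j : V, A i j * A j i
        = (∑ i, a i) * (∑ j, b j) + (∑ i, b i) * (∑ j, a j) := by
      rw [Finset.sum_mul_sum, Finset.sum_mul_sum, ← Finset.sum_add_distrib]
      refine Finset.sum_congr rfl fun i _ => ?_
      rw [← Finset.sum_add_distrib]
      exact Finset.sum_congr rfl fun j _ => key i j
    rw [e1, hsuma, hsumb]
    ring
  have hrank : (univ.filter (hherm.eigenvalues · ≠ 0)).card ≤ 2 := by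
    have h1 : A.rank ≤ 2 := by rw [hAeq]; exact my_rank_le_two a b
    rw [hherm.rank_eq_card_non_zero_eigs, Fintype.card_subtype] at h1
    exact h1
  have hge : graphEnergy G = ∑ i, |hherm.eigenvalues i| := rfl
  rw [hge]
  exact my_sum_abs _ _ (by positivity) h0 h2 hrank

lemma my_card_left {α β : Type*} [Fintype α] [Fintype β] [DecidableEq α] [DecidableEq β]
    (s : Set (α ⊕ β)) [DecidablePred (· ∈ s)] [Fintype s] :
    (univ.filter (fun x : s => (x : α ⊕ β).isLeft = true)).card
      = (univ.filter (fun a : α => Sum.inl a ∈ s)).card := by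
  refine (Finset.card_bij
    (fun (a : α) (ha : a ∈ univ.filter (fun a : α => Sum.inl a ∈ s)) =>
      (⟨Sum.inl a, by simpa using ha⟩ : s)) ?_ ?_ ?_).symm
  · intro a ha; simp
  · intro a _ b _ hab; simpa [Subtype.ext_iff] using hab
  · rintro ⟨x, hx⟩ hmem
    rcases x with c | d
    · exact ⟨c, by simpa using hx, rfl⟩
    · simp at hmem

lemma my_card_right {α β : Type*} [Fintype α] [Fintype β] [DecidableEq α] [DecidableEq β]
    (s : Set (α ⊕ β)) [DecidablePred (· ∈ s)] [Fintype s] :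
    (univ.filter (fun x : s => ¬ ((x : α ⊕ β).isLeft = true))).card
      = (univ.filter (fun b : β => Sum.inr b ∈ s)).card := by
  refine (Finset.card_bij
    (fun (b : β) (hb : b ∈ univ.filter (fun b : β => Sum.inr b ∈ s)) =>
      (⟨Sum.inr b, by simpa using hb⟩ : s)) ?_ ?_ ?_).symm
  · intro b hb; simp
  · intro a _ b _ hab; simpa [Subtype.ext_iff] using hab
  · rintro ⟨x, hx⟩ hmem
    rcases x with c | d
    · simp at hmem
    · exact ⟨d, by simpa using hx, rfl⟩

end Aux

/-- `e(K_{p,q}) = 2(p+q)√(pq) − 2p√((p−1)q) − 2q√((q−1)p)`. -/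
theorem localEnergy_completeBipartiteGraph (p q : ℕ) (hp : 0 < p) (hq : 0 < q) :
    localEnergy (completeBipartiteGraph (Fin p) (Fin q)) =
      2 * ((p : ℝ) + q) * Real.sqrt ((p : ℝ) * q)
        - 2 * (p : ℝ) * Real.sqrt (((p : ℝ) - 1) * q)
        - 2 * (q : ℝ) * Real.sqrt (((q : ℝ) - 1) * p) := by
  set G := completeBipartiteGraph (Fin p) (Fin q) with hG
  -- energy of the whole graph
  have hadj : ∀ u w : Fin p ⊕ Fin q, G.Adj u w ↔
      ((u.isLeft = true) ∧ ¬ (w.isLeft = true)) ∨ (¬ (u.isLeft = true) ∧ (w.isLeft = true)) := by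
    intro u w; cases u <;> cases w <;> simp [hG, completeBipartiteGraph]
  have hfl : (univ.filter (fun u : Fin p ⊕ Fin q => u.isLeft = true)) = univ.image Sum.inl := by
    ext x; cases x <;> simp
  have hfr : (univ.filter (fun u : Fin p ⊕ Fin q => ¬ (u.isLeft = true))) = univ.image Sum.inr := by
    ext x; cases x <;> simp
  have hcl : (univ.filter (fun u : Fin p ⊕ Fin q => u.isLeft = true)).card = p := by
    rw [hfl, Finset.card_image_of_injective _ Sum.inl_injective, card_univ, Fintype.card_fin]
  have hcr : (univ.filter (fun u : Fin p ⊕ Fin q => ¬ (u.isLeft = true))).card = q := by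
    rw [hfr, Finset.card_image_of_injective _ Sum.inr_injective, card_univ, Fintype.card_fin]
  have hmain : graphEnergy G = 2 * Real.sqrt ((p : ℝ) * q) := by
    have := graphEnergy_bipartite G (fun u : Fin p ⊕ Fin q => u.isLeft = true) p q hcl hcr hadj
    simpa using this
  -- energies of vertex-deleted subgraphs
  have hadj' : ∀ (v : Fin p ⊕ Fin q) (u w : ↥{u : Fin p ⊕ Fin q | u ≠ v}),
      (G.induce {u : Fin p ⊕ Fin q | u ≠ v}).Adj u w ↔
        (((u : Fin p ⊕ Fin q).isLeft = true) ∧ ¬ ((w : Fin p ⊕ Fin q).isLeft = true)) ∨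
          (¬ ((u : Fin p ⊕ Fin q).isLeft = true) ∧ ((w : Fin p ⊕ Fin q).isLeft = true)) := by
    rintro v ⟨u, hu⟩ ⟨w, hw⟩
    simpa using hadj u w
  have hL : ∀ i : Fin p, graphEnergy (G.induce {u : Fin p ⊕ Fin q | u ≠ Sum.inl i})
      = 2 * Real.sqrt (((p - 1 : ℕ) : ℝ) * q) := by
    intro i
    have c1 : (univ.filter (fun x : ↥{u : Fin p ⊕ Fin q | u ≠ Sum.inl i} => (x : Fin p ⊕ Fin q).isLeft = true)).card
        = p - 1 := by
      rw [my_card_left]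
      have : (univ.filter (fun a : Fin p => Sum.inl a ∈ {u : Fin p ⊕ Fin q | u ≠ Sum.inl i}))
          = univ.erase i := by
        ext a; simp [Set.mem_setOf_eq, eq_comm, Sum.inl.injEq]
      rw [this, Finset.card_erase_of_mem (mem_univ i), card_univ, Fintype.card_fin]
    have c2 : (univ.filter (fun x : ↥{u : Fin p ⊕ Fin q | u ≠ Sum.inl i} => ¬ ((x : Fin p ⊕ Fin q).isLeft = true))).card
        = q := by
      rw [my_card_right]
      have : (univ.filter (fun b : Fin q => Sum.inr b ∈ {u : Fin p ⊕ Fin q | u ≠ Sum.inl i}))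
          = univ := by
        ext b; simp [Set.mem_setOf_eq]
      rw [this, card_univ, Fintype.card_fin]
    have := graphEnergy_bipartite (G.induce {u : Fin p ⊕ Fin q | u ≠ Sum.inl i})
      (fun x => (x : Fin p ⊕ Fin q).isLeft = true) (p - 1) q c1 c2 (hadj' (Sum.inl i))
    simpa using this
  have hR : ∀ j : Fin q, graphEnergy (G.induce {u : Fin p ⊕ Fin q | u ≠ Sum.inr j})
      = 2 * Real.sqrt ((p : ℝ) * ((q - 1 : ℕ) : ℝ)) := by
    intro j
    have c1 : (univ.filter (fun x : ↥{u : Fin p ⊕ Fin q | u ≠ Sum.inr j} => (x : Fin p ⊕ Fin q).isLeft = true)).card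
        = p := by
      rw [my_card_left]
      have : (univ.filter (fun a : Fin p => Sum.inl a ∈ {u : Fin p ⊕ Fin q | u ≠ Sum.inr j}))
          = univ := by
        ext a; simp [Set.mem_setOf_eq]
      rw [this, card_univ, Fintype.card_fin]
    have c2 : (univ.filter (fun x : ↥{u : Fin p ⊕ Fin q | u ≠ Sum.inr j} => ¬ ((x : Fin p ⊕ Fin q).isLeft = true))).card
        = q - 1 := by
      rw [my_card_right]
      have : (univ.filter (fun b : Fin q => Sum.inr b ∈ {u : Fin p ⊕ Fin q | u ≠ Sum.inr j}))
          = univ.erase j := by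
        ext b; simp [Set.mem_setOf_eq, eq_comm, Sum.inr.injEq]
      rw [this, Finset.card_erase_of_mem (mem_univ j), card_univ, Fintype.card_fin]
    have := graphEnergy_bipartite (G.induce {u : Fin p ⊕ Fin q | u ≠ Sum.inr j})
      (fun x => (x : Fin p ⊕ Fin q).isLeft = true) p (q - 1) c1 c2 (hadj' (Sum.inr j))
    simpa using this
  -- assemble
  have cast1 : ((p - 1 : ℕ) : ℝ) = (p : ℝ) - 1 := by
    rw [Nat.cast_sub hp]; norm_num
  have cast2 : ((q - 1 : ℕ) : ℝ) = (q : ℝ) - 1 := by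
    rw [Nat.cast_sub hq]; norm_num
  simp only [localEnergy, localEnergyAt]
  rw [Fintype.sum_sum_type]
  have sL : ∑ i : Fin p, (graphEnergy G - graphEnergy (G.induce {u : Fin p ⊕ Fin q | u ≠ Sum.inl i}))
      = (p : ℝ) * (2 * Real.sqrt ((p : ℝ) * q) - 2 * Real.sqrt (((p : ℝ) - 1) * q)) := by
    rw [Finset.sum_congr rfl (fun i _ => by rw [hmain, hL i, cast1])]
    rw [Finset.sum_const, card_univ, Fintype.card_fin, nsmul_eq_mul]
  have sR : ∑ j : Fin q, (graphEnergy G - graphEnergy (G.induce {u : Fin p ⊕ Fin q | u ≠ Sum.inr j}))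
      = (q : ℝ) * (2 * Real.sqrt ((p : ℝ) * q) - 2 * Real.sqrt ((p : ℝ) * ((q : ℝ) - 1))) := by
    rw [Finset.sum_congr rfl (fun j _ => by rw [hmain, hR j, cast2])]
    rw [Finset.sum_const, card_univ, Fintype.card_fin, nsmul_eq_mul]
  rw [sL, sR, mul_comm ((p : ℝ)) ((q : ℝ) - 1)]
  ring
end

section
/- The graphs K₄ ∪ C₄ and K₂ ∪ K₂ ∪ C₄ are locally equienergetic: e(K₄ ∪ C₄) = e(K₂ ∪ K₂ ∪ C₄). -/
open SimpleGraph Matrix Finset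

open Polynomial

section Spectral

variable {n : Type*} [Fintype n] [DecidableEq n]

lemma charmatrix_diagonal' (d : n → ℝ) :
    charmatrix (diagonal d) = diagonal (fun i => X - C (d i)) := by
  ext i j
  by_cases h : i = j
  · subst h; simp [charmatrix_apply_eq]
  · simp [charmatrix_apply_ne _ _ _ h, diagonal_apply_ne _ h]

lemma charpoly_hermitian {A : Matrix n n ℝ} (hA : A.IsHermitian) :
    A.charpoly = ∏ i, (X - C (hA.eigenvalues i)) := by
  have hspec := hA.spectral_theorem
  set U : Matrix n n ℝ := (IsHermitian.eigenvectorUnitary hA : Matrix n n ℝ) with hU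
  have hU1 : U * star U = 1 :=
    (Matrix.mem_unitaryGroup_iff).mp (IsHermitian.eigenvectorUnitary hA).2
  set D : Matrix n n ℝ := diagonal (RCLike.ofReal ∘ hA.eigenvalues) with hD
  have key : A.charpoly = D.charpoly := by
    unfold Matrix.charpoly
    have h1 : charmatrix A = C.mapMatrix U * charmatrix D * C.mapMatrix (star U) := by
      unfold charmatrix
      rw [Matrix.mul_sub, Matrix.sub_mul]
      congr 1
      · rw [← (scalar_commute X (fun r => Commute.all X r) (C.mapMatrix U)).eq, mul_assoc,
          ← C.mapMatrix.map_mul U (star U), hU1, C.mapMatrix.map_one, mul_one]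
      · rw [← C.mapMatrix.map_mul, ← C.mapMatrix.map_mul]; exact congrArg _ hspec
    rw [h1, det_mul, det_mul, mul_right_comm, ← det_mul, ← C.mapMatrix.map_mul U (star U), hU1,
      C.mapMatrix.map_one, det_one, one_mul]
  rw [key, hD]
  unfold Matrix.charpoly
  rw [charmatrix_diagonal' (RCLike.ofReal ∘ hA.eigenvalues), det_diagonal]
  simp

lemma sum_abs_eigenvalues {A : Matrix n n ℝ} (hA : A.IsHermitian) :
    ∑ i, |hA.eigenvalues i| = (A.charpoly.roots.map (fun x => |x|)).sum := by
  have h : A.charpoly = ((Finset.univ.val.map hA.eigenvalues).map (fun a => X - C a)).prod := by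
    rw [charpoly_hermitian hA, Multiset.map_map]
    rfl
  rw [h, Polynomial.roots_multiset_prod_X_sub_C, Multiset.map_map]
  rfl

lemma graphEnergy_eq_sum (G : SimpleGraph n) [inst : DecidableRel G.Adj] :
    graphEnergy G = ((G.adjMatrix ℝ).charpoly.roots.map (fun x => |x|)).sum := by
  have hi : (Classical.decRel G.Adj) = inst := Subsingleton.elim _ _
  unfold graphEnergy
  rw [sum_abs_eigenvalues]
  congr!

end Spectral

section Invariance

variable {α β : Type*} [Fintype α] [DecidableEq α] [Fintype β] [DecidableEq β]

lemma graphEnergy_iso {G : SimpleGraph α} {H : SimpleGraph β} (e : G ≃g H) :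
    graphEnergy G = graphEnergy H := by
  classical
  rw [graphEnergy_eq_sum, graphEnergy_eq_sum]
  have hm : (H.adjMatrix ℝ) = Matrix.reindex e.toEquiv e.toEquiv (G.adjMatrix ℝ) := by
    ext i j
    simp only [Matrix.reindex_apply, Matrix.submatrix_apply, SimpleGraph.adjMatrix_apply]
    have : H.Adj i j ↔ G.Adj (e.symm i) (e.symm j) := (e.symm.map_adj_iff).symm
    exact if_congr this rfl rfl
  rw [hm, Matrix.charpoly_reindex]

lemma graphEnergy_sum_graph (G : SimpleGraph α) (H : SimpleGraph β) :
    graphEnergy (G ⊕g H) = graphEnergy G + graphEnergy H := by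
  classical
  rw [graphEnergy_eq_sum, graphEnergy_eq_sum, graphEnergy_eq_sum]
  have hadj : (G ⊕g H).adjMatrix ℝ = Matrix.fromBlocks (G.adjMatrix ℝ) 0 0 (H.adjMatrix ℝ) := by
    ext i j
    cases i <;> cases j <;>
      simp [Matrix.fromBlocks, SimpleGraph.sum_adj]
  rw [hadj, Matrix.charpoly_fromBlocks_zero₂₁,
    Polynomial.roots_mul (mul_ne_zero (Matrix.charpoly_monic _).ne_zero
      (Matrix.charpoly_monic _).ne_zero),
    Multiset.map_add, Multiset.sum_add]

end Invariance

section InduceIso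

variable {α β : Type*}

def sumInduceLeftEquiv (v : α) :
    {u : α ⊕ β // u ∈ {u | u ≠ Sum.inl v}} ≃ ({u : α // u ∈ {u | u ≠ v}} ⊕ β) where
  toFun x := match x with
    | ⟨Sum.inl a, h⟩ => Sum.inl ⟨a, fun hh => h (by simp [hh])⟩
    | ⟨Sum.inr b, _⟩ => Sum.inr b
  invFun x := match x with
    | Sum.inl ⟨a, h⟩ => ⟨Sum.inl a, by simpa using h⟩
    | Sum.inr b => ⟨Sum.inr b, by simp⟩
  left_inv := by rintro ⟨(a | b), h⟩ <;> rfl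
  right_inv := by rintro (⟨a, h⟩ | b) <;> rfl

def sumInduceLeftIso (G : SimpleGraph α) (H : SimpleGraph β) (v : α) :
    ((G ⊕g H).induce {u | u ≠ Sum.inl v}) ≃g ((G.induce {u | u ≠ v}) ⊕g H) := by
  refine ⟨sumInduceLeftEquiv v, ?_⟩
  rintro ⟨(a | b), h⟩ ⟨(c | d), h'⟩ <;>
    simp [sumInduceLeftEquiv, SimpleGraph.comap_adj, SimpleGraph.sum_adj]

def sumInduceRightEquiv (w : β) :
    {u : α ⊕ β // u ∈ {u | u ≠ Sum.inr w}} ≃ (α ⊕ {u : β // u ∈ {u | u ≠ w}}) where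
  toFun x := match x with
    | ⟨Sum.inl a, _⟩ => Sum.inl a
    | ⟨Sum.inr b, h⟩ => Sum.inr ⟨b, fun hh => h (by simp [hh])⟩
  invFun x := match x with
    | Sum.inl a => ⟨Sum.inl a, by simp⟩
    | Sum.inr ⟨b, h⟩ => ⟨Sum.inr b, by simpa using h⟩
  left_inv := by rintro ⟨(a | b), h⟩ <;> rfl
  right_inv := by rintro (a | ⟨b, h⟩) <;> rfl

def sumInduceRightIso (G : SimpleGraph α) (H : SimpleGraph β) (w : β) :
    ((G ⊕g H).induce {u | u ≠ Sum.inr w}) ≃g (G ⊕g (H.induce {u | u ≠ w})) := by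
  refine ⟨sumInduceRightEquiv w, ?_⟩
  rintro ⟨(a | b), h⟩ ⟨(c | d), h'⟩ <;>
    simp [sumInduceRightEquiv, SimpleGraph.comap_adj, SimpleGraph.sum_adj]

def topInduceIso (s : Set α) : ((⊤ : SimpleGraph α).induce s) ≃g (⊤ : SimpleGraph s) := by
  refine ⟨Equiv.refl _, ?_⟩
  rintro ⟨a, h⟩ ⟨b, h'⟩
  simp [SimpleGraph.comap_adj, Subtype.ext_iff]

end InduceIso

section DeletionEnergy

variable {α β : Type*} [Fintype α] [DecidableEq α] [Fintype β] [DecidableEq β]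

lemma energy_del_inl (G : SimpleGraph α) (H : SimpleGraph β) (v : α) :
    graphEnergy ((G ⊕g H).induce {u | u ≠ Sum.inl v})
      = graphEnergy (G.induce {u | u ≠ v}) + graphEnergy H := by
  rw [graphEnergy_iso (sumInduceLeftIso G H v), graphEnergy_sum_graph]

lemma energy_del_inr (G : SimpleGraph α) (H : SimpleGraph β) (w : β) :
    graphEnergy ((G ⊕g H).induce {u | u ≠ Sum.inr w})
      = graphEnergy G + graphEnergy (H.induce {u | u ≠ w}) := by
  rw [graphEnergy_iso (sumInduceRightIso G H w), graphEnergy_sum_graph]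

end DeletionEnergy

section DetFour

variable {R : Type*} [CommRing R]

lemma det_fin_four (A : Matrix (Fin 4) (Fin 4) R) :
    Matrix.det A =
      A 0 0 * (A 1 1 * A 2 2 * A 3 3 - A 1 1 * A 2 3 * A 3 2 - A 1 2 * A 2 1 * A 3 3
        + A 1 2 * A 2 3 * A 3 1 + A 1 3 * A 2 1 * A 3 2 - A 1 3 * A 2 2 * A 3 1)
      - A 0 1 * (A 1 0 * A 2 2 * A 3 3 - A 1 0 * A 2 3 * A 3 2 - A 1 2 * A 2 0 * A 3 3
        + A 1 2 * A 2 3 * A 3 0 + A 1 3 * A 2 0 * A 3 2 - A 1 3 * A 2 2 * A 3 0)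
      + A 0 2 * (A 1 0 * A 2 1 * A 3 3 - A 1 0 * A 2 3 * A 3 1 - A 1 1 * A 2 0 * A 3 3
        + A 1 1 * A 2 3 * A 3 0 + A 1 3 * A 2 0 * A 3 1 - A 1 3 * A 2 1 * A 3 0)
      - A 0 3 * (A 1 0 * A 2 1 * A 3 2 - A 1 0 * A 2 2 * A 3 1 - A 1 1 * A 2 0 * A 3 2
        + A 1 1 * A 2 2 * A 3 0 + A 1 2 * A 2 0 * A 3 1 - A 1 2 * A 2 1 * A 3 0) := by
  rw [Matrix.det_succ_row_zero]
  simp only [Fin.sum_univ_succ, Matrix.det_fin_three, Matrix.submatrix_apply, Fin.sum_univ_zero]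
  norm_num [Fin.succAbove, Fin.lt_def, show (Fin.succ 2 : Fin 4) = 3 from rfl,
    show ((2 : Fin 3).castSucc : Fin 4) = 2 from rfl, show (((3 : Fin 4)) : ℕ) = 3 from rfl]
  ring

end DetFour

section ConcreteEnergies

lemma energy_top1 : graphEnergy (⊤ : SimpleGraph (Fin 1)) = 0 := by
  have cm : charmatrix ((⊤ : SimpleGraph (Fin 1)).adjMatrix ℝ) = !![X] := by
    ext i j
    fin_cases i <;> fin_cases j <;>
      simp (config := { decide := true }) [charmatrix_apply, Matrix.diagonal,
        SimpleGraph.adjMatrix_apply, Matrix.vecHead, Matrix.vecTail]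
  have cp : ((⊤ : SimpleGraph (Fin 1)).adjMatrix ℝ).charpoly
      = (({0} : Multiset ℝ).map (fun a => X - C a)).prod := by
    rw [Matrix.charpoly, cm, Matrix.det_fin_one]
    simp
  rw [graphEnergy_eq_sum, cp, Polynomial.roots_multiset_prod_X_sub_C]
  simp

lemma energy_top2 : graphEnergy (⊤ : SimpleGraph (Fin 2)) = 2 := by
  have cm : charmatrix ((⊤ : SimpleGraph (Fin 2)).adjMatrix ℝ) = !![X, -1; -1, X] := by
    ext i j
    fin_cases i <;> fin_cases j <;>
      simp (config := { decide := true }) [charmatrix_apply, Matrix.diagonal,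
        SimpleGraph.adjMatrix_apply, Matrix.vecHead, Matrix.vecTail]
  have cp : ((⊤ : SimpleGraph (Fin 2)).adjMatrix ℝ).charpoly
      = (({1, -1} : Multiset ℝ).map (fun a => X - C a)).prod := by
    rw [Matrix.charpoly, cm, Matrix.det_fin_two]
    simp [Multiset.insert_eq_cons, Polynomial.C_1, map_neg]
    ring
  rw [graphEnergy_eq_sum, cp, Polynomial.roots_multiset_prod_X_sub_C]
  simp [Multiset.insert_eq_cons]
  norm_num

lemma energy_top3 : graphEnergy (⊤ : SimpleGraph (Fin 3)) = 4 := by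
  have cm : charmatrix ((⊤ : SimpleGraph (Fin 3)).adjMatrix ℝ)
      = !![X, -1, -1; -1, X, -1; -1, -1, X] := by
    ext i j
    fin_cases i <;> fin_cases j <;>
      simp (config := { decide := true }) [charmatrix_apply, Matrix.diagonal,
        SimpleGraph.adjMatrix_apply, Matrix.vecHead, Matrix.vecTail]
  have cp : ((⊤ : SimpleGraph (Fin 3)).adjMatrix ℝ).charpoly
      = (({2, -1, -1} : Multiset ℝ).map (fun a => X - C a)).prod := by
    rw [Matrix.charpoly, cm, Matrix.det_fin_three]
    simp [Multiset.insert_eq_cons, Polynomial.C_1, map_neg, map_ofNat,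
      Matrix.vecHead, Matrix.vecTail]
    ring
  rw [graphEnergy_eq_sum, cp, Polynomial.roots_multiset_prod_X_sub_C]
  simp [Multiset.insert_eq_cons]
  norm_num

lemma energy_top4 : graphEnergy (⊤ : SimpleGraph (Fin 4)) = 6 := by
  have cm : charmatrix ((⊤ : SimpleGraph (Fin 4)).adjMatrix ℝ)
      = !![X, -1, -1, -1; -1, X, -1, -1; -1, -1, X, -1; -1, -1, -1, X] := by
    ext i j
    fin_cases i <;> fin_cases j <;>
      simp (config := { decide := true }) [charmatrix_apply, Matrix.diagonal,
        SimpleGraph.adjMatrix_apply, Matrix.vecHead, Matrix.vecTail]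
  have cp : ((⊤ : SimpleGraph (Fin 4)).adjMatrix ℝ).charpoly
      = (({3, -1, -1, -1} : Multiset ℝ).map (fun a => X - C a)).prod := by
    rw [Matrix.charpoly, cm, det_fin_four]
    simp [Multiset.insert_eq_cons, Polynomial.C_1, map_neg, map_ofNat,
      Matrix.vecHead, Matrix.vecTail]
    ring
  rw [graphEnergy_eq_sum, cp, Polynomial.roots_multiset_prod_X_sub_C]
  simp [Multiset.insert_eq_cons]
  norm_num

lemma energy_cycle4 : graphEnergy (cycleGraph 4) = 4 := by
  have cm : charmatrix ((cycleGraph 4).adjMatrix ℝ)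
      = !![X, -1, 0, -1; -1, X, -1, 0; 0, -1, X, -1; -1, 0, -1, X] := by
    ext i j
    fin_cases i <;> fin_cases j <;>
      simp (config := { decide := true }) [charmatrix_apply, Matrix.diagonal,
        SimpleGraph.adjMatrix_apply, Matrix.vecHead, Matrix.vecTail]
  have cp : ((cycleGraph 4).adjMatrix ℝ).charpoly
      = (({2, -2, 0, 0} : Multiset ℝ).map (fun a => X - C a)).prod := by
    rw [Matrix.charpoly, cm, det_fin_four]
    simp [Multiset.insert_eq_cons, Polynomial.C_1, map_neg, map_ofNat,
      Matrix.vecHead, Matrix.vecTail]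
    ring
  rw [graphEnergy_eq_sum, cp, Polynomial.roots_multiset_prod_X_sub_C]
  simp [Multiset.insert_eq_cons]
  norm_num

/-- The path graph on three vertices `0 - 1 - 2`. -/
def P3 : SimpleGraph (Fin 3) where
  Adj a b := (a = 0 ∧ b = 1) ∨ (a = 1 ∧ b = 0) ∨ (a = 1 ∧ b = 2) ∨ (a = 2 ∧ b = 1)
  symm := by constructor; intro a b h; revert h; revert b; revert a; decide
  loopless := by constructor; intro a; revert a; decide

instance : DecidableRel P3.Adj := fun a b =>
  inferInstanceAs (Decidable (_ ∨ _))

lemma energy_P3 : graphEnergy P3 = 2 * Real.sqrt 2 := by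
  have cm : charmatrix (P3.adjMatrix ℝ) = !![X, -1, 0; -1, X, -1; 0, -1, X] := by
    ext i j
    fin_cases i <;> fin_cases j <;>
      simp (config := { decide := true }) [charmatrix_apply, Matrix.diagonal,
        SimpleGraph.adjMatrix_apply, Matrix.vecHead, Matrix.vecTail]
  have h2 : (C (Real.sqrt 2)) * (C (Real.sqrt 2)) = (2 : ℝ[X]) := by
    rw [← Polynomial.C_mul, Real.mul_self_sqrt (by norm_num)]
    exact map_ofNat C 2
  have cp : (P3.adjMatrix ℝ).charpoly
      = (({Real.sqrt 2, -Real.sqrt 2, 0} : Multiset ℝ).map (fun a => X - C a)).prod := by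
    rw [Matrix.charpoly, cm, Matrix.det_fin_three]
    simp [Multiset.insert_eq_cons, Polynomial.C_1, map_neg, map_ofNat,
      Matrix.vecHead, Matrix.vecTail]
    linear_combination (X : ℝ[X]) * h2
  rw [graphEnergy_eq_sum, cp, Polynomial.roots_multiset_prod_X_sub_C]
  simp [Multiset.insert_eq_cons, abs_of_nonneg (Real.sqrt_nonneg 2)]
  ring

end ConcreteEnergies

section CycleDeletion

def cycEquiv (v : Fin 4) : Fin 3 ≃ {u : Fin 4 // u ∈ {u | u ≠ v}} where
  toFun i := ⟨v + ⟨i.val + 1, by omega⟩, by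
    simp only [Set.mem_setOf_eq]
    intro h
    have h0 : (⟨i.val + 1, by omega⟩ : Fin 4) = 0 := add_eq_left.mp h
    have := congrArg Fin.val h0
    simp at this⟩
  invFun u := ⟨(u.val - v).val - 1, by
    have h1 : (u.val - v) ≠ 0 := sub_ne_zero.mpr u.2
    have h2 : (u.val - v).val ≠ 0 := fun hh => h1 (Fin.ext hh)
    have h3 := (u.val - v).isLt
    omega⟩
  left_inv i := by
    apply Fin.ext
    simp [add_sub_cancel_left]
  right_inv u := by
    apply Subtype.ext
    have h1 : (u.val - v) ≠ 0 := sub_ne_zero.mpr u.2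
    have h2 : (u.val - v).val ≠ 0 := fun hh => h1 (Fin.ext hh)
    have h3 := (u.val - v).isLt
    show v + _ = u.val
    have hk : (⟨(u.val - v).val - 1 + 1, by omega⟩ : Fin 4) = u.val - v := by
      apply Fin.ext
      simp
      omega
    rw [hk, add_sub_cancel]

def cycInduceIso (v : Fin 4) : P3 ≃g ((cycleGraph 4).induce {u | u ≠ v}) := by
  refine ⟨cycEquiv v, ?_⟩
  intro a b
  show (cycleGraph 4).Adj (v + ⟨a.val + 1, by omega⟩) (v + ⟨b.val + 1, by omega⟩) ↔ P3.Adj a b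
  rw [add_comm v, add_comm v]
  rw [cycleGraph_adj, add_sub_add_right_eq_sub, add_sub_add_right_eq_sub]
  revert a b
  decide

lemma energy_cyc_del (v : Fin 4) :
    graphEnergy ((cycleGraph 4).induce {u | u ≠ v}) = 2 * Real.sqrt 2 := by
  rw [← graphEnergy_iso (cycInduceIso v), energy_P3]

end CycleDeletion

section TopDeletion

lemma energy_top_del4 (v : Fin 4) :
    graphEnergy ((⊤ : SimpleGraph (Fin 4)).induce {u | u ≠ v}) = 4 := by
  rw [graphEnergy_iso (topInduceIso _)]
  have hc : Fintype.card {u : Fin 4 // u ∈ {u | u ≠ v}} = 3 := by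
    simp [Set.mem_setOf_eq, Fintype.card_subtype_compl]
  rw [graphEnergy_iso (SimpleGraph.Iso.completeGraph
    (Fintype.equivFinOfCardEq hc))]
  exact energy_top3

lemma energy_top_del2 (v : Fin 2) :
    graphEnergy ((⊤ : SimpleGraph (Fin 2)).induce {u | u ≠ v}) = 0 := by
  rw [graphEnergy_iso (topInduceIso _)]
  have hc : Fintype.card {u : Fin 2 // u ∈ {u | u ≠ v}} = 1 := by
    simp [Set.mem_setOf_eq, Fintype.card_subtype_compl]
  rw [graphEnergy_iso (SimpleGraph.Iso.completeGraph
    (Fintype.equivFinOfCardEq hc))]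
  exact energy_top1

end TopDeletion

/-- `e(K₄ ∪ C₄) = e(K₂ ∪ K₂ ∪ C₄)`. -/
theorem localEnergy_K4_C4 :
    localEnergy ((⊤ : SimpleGraph (Fin 4)) ⊕g cycleGraph 4) =
      localEnergy (((⊤ : SimpleGraph (Fin 2)) ⊕g (⊤ : SimpleGraph (Fin 2)))
        ⊕g cycleGraph 4) := by
  have eG1 : graphEnergy ((⊤ : SimpleGraph (Fin 4)) ⊕g cycleGraph 4) = 10 := by
    rw [graphEnergy_sum_graph, energy_top4, energy_cycle4]; norm_num
  have eK22 : graphEnergy ((⊤ : SimpleGraph (Fin 2)) ⊕g (⊤ : SimpleGraph (Fin 2))) = 4 := by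
    rw [graphEnergy_sum_graph, energy_top2]; norm_num
  have eG2 : graphEnergy (((⊤ : SimpleGraph (Fin 2)) ⊕g (⊤ : SimpleGraph (Fin 2)))
      ⊕g cycleGraph 4) = 8 := by
    rw [graphEnergy_sum_graph, eK22, energy_cycle4]; norm_num
  unfold localEnergy localEnergyAt
  rw [Fintype.sum_sum_type, Fintype.sum_sum_type, Fintype.sum_sum_type]
  have h1 : ∀ a : Fin 4,
      graphEnergy (((⊤ : SimpleGraph (Fin 4)) ⊕g cycleGraph 4).induce
        {u | u ≠ Sum.inl a}) = 8 := by
    intro a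
    rw [energy_del_inl, energy_top_del4, energy_cycle4]; norm_num
  have h2 : ∀ b : Fin 4,
      graphEnergy (((⊤ : SimpleGraph (Fin 4)) ⊕g cycleGraph 4).induce
        {u | u ≠ Sum.inr b}) = 6 + 2 * Real.sqrt 2 := by
    intro b
    rw [energy_del_inr, energy_top4, energy_cyc_del]
  have h3 : ∀ a : Fin 2,
      graphEnergy ((((⊤ : SimpleGraph (Fin 2)) ⊕g (⊤ : SimpleGraph (Fin 2)))
        ⊕g cycleGraph 4).induce {u | u ≠ Sum.inl (Sum.inl a)}) = 6 := by
    intro a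
    rw [energy_del_inl, energy_del_inl, energy_top_del2, energy_top2, energy_cycle4]; norm_num
  have h4 : ∀ a : Fin 2,
      graphEnergy ((((⊤ : SimpleGraph (Fin 2)) ⊕g (⊤ : SimpleGraph (Fin 2)))
        ⊕g cycleGraph 4).induce {u | u ≠ Sum.inl (Sum.inr a)}) = 6 := by
    intro a
    rw [energy_del_inl, energy_del_inr, energy_top_del2, energy_top2, energy_cycle4]; norm_num
  have h5 : ∀ b : Fin 4,
      graphEnergy ((((⊤ : SimpleGraph (Fin 2)) ⊕g (⊤ : SimpleGraph (Fin 2)))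
        ⊕g cycleGraph 4).induce {u | u ≠ Sum.inr b}) = 4 + 2 * Real.sqrt 2 := by
    intro b
    rw [energy_del_inr, eK22, energy_cyc_del]
  simp only [eG1, eG2, h1, h2, h3, h4, h5, Finset.sum_const, Finset.card_univ,
    Fintype.card_fin, nsmul_eq_mul]
  ring
end
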